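/- (When the malicious agent measures 0, the receiver holds a Pauli-corrected copy of the message.) Let |Φ⟩₁ ∈ EuclideanSpace ℂ (Fin 4 → ZMod 2) be the state obtained by applying CNOT (control s₁, target s₂) and then Hadamard on s₁ to φ ⊗ W₃, where φ = α|0⟩ + β|1⟩ (α, β ∈ ℂ) and the qubits are ordered (s₁, s₂, r, m). For each (m₀, m₁) ∈ {0,1}², the component of |Φ⟩₁ supported on bitstrings with s₁-bit m₀, s₂-bit m₁ and m-bit 0 equals (1/√6) |m₀ m₁⟩_{s₁s₂} ⊗ (σ_{m₀m₁} φ)_r ⊗ |0⟩_m, where σ_{00} = X, σ_{01} = I, σ_{10} = XZ, σ_{11} = Z are single-qubit Pauli products. -/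

import Mathlib

/-- Amplitude of the 3-qubit W state at bitstring `(a, b, c)`. -/
noncomputable def w3amp (a b c : ZMod 2) : ℂ :=
  if (a = 1 ∧ b = 0 ∧ c = 0) ∨ (a = 0 ∧ b = 1 ∧ c = 0) ∨ (a = 0 ∧ b = 0 ∧ c = 1)
  then ((1 / Real.sqrt 3 : ℝ) : ℂ) else 0

/-- The joint state `φ ⊗ W₃` with `φ = α|0⟩ + β|1⟩` on qubit `s₁ = 0` and the
3-qubit W state on qubits `(s₂, r, m) = (1, 2, 3)`. -/
noncomputable def jointState (α β : ℂ) : EuclideanSpace ℂ (Fin 4 → ZMod 2) :=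
  WithLp.toLp 2 (fun x => (if x 0 = 0 then α else β) * w3amp (x 1) (x 2) (x 3))

/-- CNOT with control qubit `0` and target qubit `1` (a self-inverse basis permutation). -/
noncomputable def cnot01 (ψ : EuclideanSpace ℂ (Fin 4 → ZMod 2)) :
    EuclideanSpace ℂ (Fin 4 → ZMod 2) :=
  WithLp.toLp 2 (fun x => ψ (Function.update x 1 (x 1 + x 0)))

/-- Hadamard gate on qubit `0`. -/
noncomputable def had0 (ψ : EuclideanSpace ℂ (Fin 4 → ZMod 2)) :
    EuclideanSpace ℂ (Fin 4 → ZMod 2) :=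
  WithLp.toLp 2 (fun x => ((1 / Real.sqrt 2 : ℝ) : ℂ) *
    (ψ (Function.update x 0 0) + (if x 0 = 0 then 1 else -1) * ψ (Function.update x 0 1)))

/-- The state `|Φ⟩₁` obtained by applying CNOT (control `s₁`, target `s₂`) and then
Hadamard on `s₁` to `(α|0⟩ + β|1⟩) ⊗ W₃`. -/
noncomputable def Phi1 (α β : ℂ) : EuclideanSpace ℂ (Fin 4 → ZMod 2) :=
  had0 (cnot01 (jointState α β))

/-- Computational-basis vector `|b₀b₁b₂b₃⟩`. -/
noncomputable def ket4 (b0 b1 b2 b3 : ZMod 2) : EuclideanSpace ℂ (Fin 4 → ZMod 2) :=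
  EuclideanSpace.single ![b0, b1, b2, b3] 1

/-- Single-qubit Pauli X on an amplitude function. -/
noncomputable def pX (f : ZMod 2 → ℂ) : ZMod 2 → ℂ := fun b => f (b + 1)

/-- Single-qubit Pauli Z on an amplitude function. -/
noncomputable def pZ (f : ZMod 2 → ℂ) : ZMod 2 → ℂ := fun b => if b = 0 then f b else -f b

/-- The Pauli correction `σ_{m₀m₁}`: `σ₀₀ = X`, `σ₀₁ = I`, `σ₁₀ = XZ`, `σ₁₁ = Z`. -/
noncomputable def pauliCorr (m0 m1 : ZMod 2) : (ZMod 2 → ℂ) → (ZMod 2 → ℂ) :=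
  if m0 = 0 then (if m1 = 0 then pX else id)
  else (if m1 = 0 then pX ∘ pZ else pZ)

theorem stmt12 (α β : ℂ) (m0 m1 : ZMod 2) :
    (WithLp.toLp 2 (fun x : Fin 4 → ZMod 2 =>
        if x 0 = m0 ∧ x 1 = m1 ∧ x 3 = 0 then Phi1 α β x else 0) :
      EuclideanSpace ℂ (Fin 4 → ZMod 2)) =
    (WithLp.toLp 2 (fun x : Fin 4 → ZMod 2 =>
        if x 0 = m0 ∧ x 1 = m1 ∧ x 3 = 0 then
          ((1 / Real.sqrt 6 : ℝ) : ℂ) *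
            pauliCorr m0 m1 (fun b => if b = 0 then α else β) (x 2)
        else 0) :
      EuclideanSpace ℂ (Fin 4 → ZMod 2)) := by
  have h6 : (Real.sqrt 6 : ℝ) = Real.sqrt 2 * Real.sqrt 3 := by
    rw [← Real.sqrt_mul (by norm_num)]; norm_num
  have hZ : ∀ a : ZMod 2, a = 0 ∨ a = 1 := by decide
  congr 1
  funext x
  by_cases h : x 0 = m0 ∧ x 1 = m1 ∧ x 3 = 0
  · obtain ⟨h0, h1, h3⟩ := h
    rw [if_pos ⟨h0, h1, h3⟩, if_pos ⟨h0, h1, h3⟩]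
    simp only [Phi1, had0, cnot01, jointState, w3amp, pauliCorr,
      Function.update_apply, WithLp.ofLp_toLp]
    norm_num
    rcases hZ m0 with hm0 | hm0 <;> rcases hZ m1 with hm1 | hm1 <;>
      rcases hZ (x 2) with h2 | h2 <;>
      simp [hm0, hm1, h0, h1, h2, h3, h6, pX, pZ,
        (by decide : (2 : ZMod 2) = 0), (by decide : (1 : ZMod 2) + 1 = 0)] <;>
      push_cast <;> ring
  · simp only [if_neg h]
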